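/- Fix an integer a ≥ 2, 1 ≤ i ≤ a−1, and work in A_ħ = A(ℂ[ħ], ħ). Let g ∈ ℂ[ħ][y_1,…,y_a] be a polynomial invariant under the transposition of the variables y_i and y_{i+1}. Then there exist N ∈ ℕ and polynomials p_0, …, p_{N−1} ∈ ℂ[ħ][y_1,…,y_a] such that φ(g)·s_i = s_i·φ(g) + Σ_{j=0}^{N−1} y_i^j · e_i · φ(p_j) in A_ħ (and one may take N to be the total degree of g). -/

import Mathlib

/-- Generators of the (affine) VW superalgebra on `a` strands:
`s i`, `e i` for `i : Fin (a-1)` (0-based, so `s i` is the paper's `s_{i+1}`),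
and `y j` for `j : Fin a` (0-based, so `y j` is the paper's `y_{j+1}`). -/
inductive VWGen (a : ℕ) : Type
  | s : Fin (a - 1) → VWGen a
  | e : Fin (a - 1) → VWGen a
  | y : Fin a → VWGen a

/-- The generator `s_i` inside the free algebra. -/
noncomputable def Sf (a : ℕ) (R : Type) [CommRing R] (i : Fin (a - 1)) :
    FreeAlgebra R (VWGen a) := FreeAlgebra.ι R (VWGen.s i)

/-- The generator `e_i` inside the free algebra. -/
noncomputable def Ef (a : ℕ) (R : Type) [CommRing R] (i : Fin (a - 1)) :
    FreeAlgebra R (VWGen a) := FreeAlgebra.ι R (VWGen.e i)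

/-- The generator `y_j` inside the free algebra. -/
noncomputable def Yf (a : ℕ) (R : Type) [CommRing R] (j : Fin a) :
    FreeAlgebra R (VWGen a) := FreeAlgebra.ι R (VWGen.y j)

/-- The scalar `hb` inside the free algebra. -/
noncomputable def Hf (a : ℕ) (R : Type) [CommRing R] (hb : R) :
    FreeAlgebra R (VWGen a) := algebraMap R (FreeAlgebra R (VWGen a)) hb

/-- The defining relations (VW1)-(VW9) of the affine VW superalgebra `A(R,hb)`
(all indices are 0-based translations of the 1-based indices of the paper). -/
inductive VWRel (a : ℕ) (R : Type) [CommRing R] (hb : R) :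
    FreeAlgebra R (VWGen a) → FreeAlgebra R (VWGen a) → Prop
  -- (VW1)
  | vw1 (i : Fin (a - 1)) : VWRel a R hb (Sf a R i * Sf a R i) 1
  -- (VW2)
  | vw2a (i j : Fin (a - 1)) (h : (i : ℕ) + 1 < j ∨ (j : ℕ) + 1 < i) :
      VWRel a R hb (Sf a R i * Ef a R j) (Ef a R j * Sf a R i)
  | vw2b (i j : Fin (a - 1)) (h : (i : ℕ) + 1 < j ∨ (j : ℕ) + 1 < i) :
      VWRel a R hb (Ef a R i * Ef a R j) (Ef a R j * Ef a R i)
  | vw2c (i : Fin (a - 1)) (j : Fin a) (h1 : (j : ℕ) ≠ i) (h2 : (j : ℕ) ≠ (i : ℕ) + 1) :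
      VWRel a R hb (Ef a R i * Yf a R j) (Yf a R j * Ef a R i)
  | vw2d (i j : Fin a) : VWRel a R hb (Yf a R i * Yf a R j) (Yf a R j * Yf a R i)
  -- (VW3)
  | vw3a (i j : Fin (a - 1)) (h : (i : ℕ) + 1 < j ∨ (j : ℕ) + 1 < i) :
      VWRel a R hb (Sf a R i * Sf a R j) (Sf a R j * Sf a R i)
  | vw3b (i : ℕ) (h1 : i < a - 1) (h2 : i + 1 < a - 1) :
      VWRel a R hb (Sf a R ⟨i, h1⟩ * Sf a R ⟨i + 1, h2⟩ * Sf a R ⟨i, h1⟩)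
        (Sf a R ⟨i + 1, h2⟩ * Sf a R ⟨i, h1⟩ * Sf a R ⟨i + 1, h2⟩)
  | vw3c (i : Fin (a - 1)) (j : Fin a) (h1 : (j : ℕ) ≠ i) (h2 : (j : ℕ) ≠ (i : ℕ) + 1) :
      VWRel a R hb (Sf a R i * Yf a R j) (Yf a R j * Sf a R i)
  -- (VW4)
  | vw4a (i : ℕ) (h1 : i < a - 1) (h2 : i + 1 < a - 1) :
      VWRel a R hb (Ef a R ⟨i + 1, h2⟩ * Ef a R ⟨i, h1⟩ * Ef a R ⟨i + 1, h2⟩) (-Ef a R ⟨i + 1, h2⟩)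
  | vw4b (i : ℕ) (h1 : i < a - 1) (h2 : i + 1 < a - 1) :
      VWRel a R hb (Ef a R ⟨i, h1⟩ * Ef a R ⟨i + 1, h2⟩ * Ef a R ⟨i, h1⟩) (-Ef a R ⟨i, h1⟩)
  -- (VW5)
  | vw5a (i : Fin (a - 1)) : VWRel a R hb (Ef a R i * Sf a R i) (Ef a R i)
  | vw5b (i : Fin (a - 1)) : VWRel a R hb (Sf a R i * Ef a R i) (-Ef a R i)
  | vw5c (i : ℕ) (h1 : i < a - 1) (h2 : i + 1 < a - 1) :
      VWRel a R hb (Sf a R ⟨i, h1⟩ * Ef a R ⟨i + 1, h2⟩ * Ef a R ⟨i, h1⟩)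
        (Sf a R ⟨i + 1, h2⟩ * Ef a R ⟨i, h1⟩)
  | vw5d (i : ℕ) (h1 : i < a - 1) (h2 : i + 1 < a - 1) :
      VWRel a R hb (Sf a R ⟨i + 1, h2⟩ * Ef a R ⟨i, h1⟩ * Ef a R ⟨i + 1, h2⟩)
        (-(Sf a R ⟨i, h1⟩ * Ef a R ⟨i + 1, h2⟩))
  | vw5e (i : ℕ) (h1 : i < a - 1) (h2 : i + 1 < a - 1) :
      VWRel a R hb (Ef a R ⟨i + 1, h2⟩ * Ef a R ⟨i, h1⟩ * Sf a R ⟨i + 1, h2⟩)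
        (Ef a R ⟨i + 1, h2⟩ * Sf a R ⟨i, h1⟩)
  | vw5f (i : ℕ) (h1 : i < a - 1) (h2 : i + 1 < a - 1) :
      VWRel a R hb (Ef a R ⟨i, h1⟩ * Ef a R ⟨i + 1, h2⟩ * Sf a R ⟨i, h1⟩)
        (-(Ef a R ⟨i, h1⟩ * Sf a R ⟨i + 1, h2⟩))
  -- (VW6)
  | vw6 (i : Fin (a - 1)) : VWRel a R hb (Ef a R i * Ef a R i) 0
  -- (VW7)
  | vw7a (i : ℕ) (h1 : i < a - 1) (hy : i < a) (hy2 : i + 1 < a) :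
      VWRel a R hb (Sf a R ⟨i, h1⟩ * Yf a R ⟨i, hy⟩ - Yf a R ⟨i + 1, hy2⟩ * Sf a R ⟨i, h1⟩)
        (-(Hf a R hb * Ef a R ⟨i, h1⟩) - Hf a R hb)
  | vw7b (i : ℕ) (h1 : i < a - 1) (hy : i < a) (hy2 : i + 1 < a) :
      VWRel a R hb (Yf a R ⟨i, hy⟩ * Sf a R ⟨i, h1⟩ - Sf a R ⟨i, h1⟩ * Yf a R ⟨i + 1, hy2⟩)
        (Hf a R hb * Ef a R ⟨i, h1⟩ - Hf a R hb)
  -- (VW8)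
  | vw8 (k : ℕ) (hk : 1 ≤ k) (h0 : 0 < a - 1) (h0' : 0 < a) :
      VWRel a R hb (Ef a R ⟨0, h0⟩ * Yf a R ⟨0, h0'⟩ ^ k * Ef a R ⟨0, h0⟩) 0
  -- (VW9)
  | vw9a (i : ℕ) (h1 : i < a - 1) (hy : i < a) (hy2 : i + 1 < a) :
      VWRel a R hb (Ef a R ⟨i, h1⟩ * (Yf a R ⟨i + 1, hy2⟩ - Yf a R ⟨i, hy⟩))
        (Hf a R hb * Ef a R ⟨i, h1⟩)
  | vw9b (i : ℕ) (h1 : i < a - 1) (hy : i < a) (hy2 : i + 1 < a) :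
      VWRel a R hb ((Yf a R ⟨i + 1, hy2⟩ - Yf a R ⟨i, hy⟩) * Ef a R ⟨i, h1⟩)
        (-(Hf a R hb * Ef a R ⟨i, h1⟩))

/-- The affine VW superalgebra `A(R,hb)` on `a` strands: the quotient of the free
`R`-algebra on the generators by the two-sided ideal generated by the relations. -/
noncomputable abbrev VWA (a : ℕ) (R : Type) [CommRing R] (hb : R) : Type :=
  RingQuot (VWRel a R hb)

/-- The image of the generator `s_i` in `A(R,hb)`. -/
noncomputable def sg (a : ℕ) (R : Type) [CommRing R] (hb : R) (i : Fin (a - 1)) : VWA a R hb :=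
  RingQuot.mkAlgHom R (VWRel a R hb) (Sf a R i)

/-- The image of the generator `e_i` in `A(R,hb)`. -/
noncomputable def eg (a : ℕ) (R : Type) [CommRing R] (hb : R) (i : Fin (a - 1)) : VWA a R hb :=
  RingQuot.mkAlgHom R (VWRel a R hb) (Ef a R i)

/-- The image of the generator `y_j` in `A(R,hb)`. -/
noncomputable def yg (a : ℕ) (R : Type) [CommRing R] (hb : R) (j : Fin a) : VWA a R hb :=
  RingQuot.mkAlgHom R (VWRel a R hb) (Yf a R j)

/-- The deformed squared Vandermonde polynomial `D = ∏_{i<j} ((y_i − y_j)² − hb²)`. -/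
noncomputable def Dpoly (a : ℕ) (R : Type) [CommRing R] (hb : R) : MvPolynomial (Fin a) R :=
  ∏ p ∈ Finset.univ.filter (fun p : Fin a × Fin a => p.1 < p.2),
    ((MvPolynomial.X p.1 - MvPolynomial.X p.2) ^ 2 - MvPolynomial.C (hb ^ 2))

theorem yg_comm (a : ℕ) (R : Type) [CommRing R] (hb : R) (i j : Fin a) :
    yg a R hb i * yg a R hb j = yg a R hb j * yg a R hb i := by
  have h := RingQuot.mkAlgHom_rel R (VWRel.vw2d (a := a) (R := R) (hb := hb) i j)
  simpa only [yg, map_mul] using h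

/-- The subalgebra of `A(R,ħ)` generated by the `y_j`; it is commutative. -/
noncomputable def ygAdjoin (a : ℕ) (R : Type) [CommRing R] (hb : R) : Subalgebra R (VWA a R hb) :=
  Algebra.adjoin R (Set.range (yg a R hb))

noncomputable instance (a : ℕ) (R : Type) [CommRing R] (hb : R) :
    CommRing (ygAdjoin a R hb) :=
  { (ygAdjoin a R hb).toRing with
    mul_comm := (Algebra.isMulCommutative_adjoin R (s := Set.range (yg a R hb)) (by
      rintro x ⟨i, rfl⟩ y ⟨j, rfl⟩
      exact yg_comm a R hb i j)).is_comm.comm }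

/-- The `R`-algebra homomorphism `φ : R[y_1,…,y_a] → A(R,ħ)` sending the variable `y_j`
to the generator `y_j`. -/
noncomputable def vwphi (a : ℕ) (R : Type) [CommRing R] (hb : R) :
    MvPolynomial (Fin a) R →ₐ[R] VWA a R hb :=
  (ygAdjoin a R hb).val.comp
    (MvPolynomial.aeval (R := R)
      (fun j : Fin a =>
        (⟨yg a R hb j, Algebra.subset_adjoin ⟨j, rfl⟩⟩ : ygAdjoin a R hb)))

section VWAux

open MvPolynomial

variable (a : ℕ) (R : Type) [CommRing R] (hb : R)

lemma phi_X (j : Fin a) : vwphi a R hb (MvPolynomial.X j) = yg a R hb j := by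
  simp [vwphi]

lemma phi_C (c : R) : vwphi a R hb (MvPolynomial.C c) = algebraMap R (VWA a R hb) c := by
  rw [← MvPolynomial.algebraMap_eq]
  exact (vwphi a R hb).commutes c

variable (i : ℕ) (h1 : i < a - 1) (hy : i < a) (hy2 : i + 1 < a)

lemma rel_ys_i :
    yg a R hb ⟨i, hy⟩ * sg a R hb ⟨i, h1⟩ =
      sg a R hb ⟨i, h1⟩ * yg a R hb ⟨i + 1, hy2⟩ +
        (algebraMap R (VWA a R hb) hb * eg a R hb ⟨i, h1⟩ - algebraMap R (VWA a R hb) hb) := by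
  have h := RingQuot.mkAlgHom_rel R (VWRel.vw7b (a := a) (hb := hb) i h1 hy hy2)
  simp only [map_sub, map_mul, Hf, AlgHom.commutes] at h
  simp only [yg, sg, eg]
  rw [sub_eq_iff_eq_add'] at h
  exact h

lemma rel_ys_i1 :
    yg a R hb ⟨i + 1, hy2⟩ * sg a R hb ⟨i, h1⟩ =
      sg a R hb ⟨i, h1⟩ * yg a R hb ⟨i, hy⟩ +
        (algebraMap R (VWA a R hb) hb * eg a R hb ⟨i, h1⟩ + algebraMap R (VWA a R hb) hb) := by
  have h := RingQuot.mkAlgHom_rel R (VWRel.vw7a (a := a) (hb := hb) i h1 hy hy2)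
  simp only [map_sub, map_mul, map_neg, Hf, AlgHom.commutes] at h
  simp only [yg, sg, eg]
  rw [sub_eq_iff_eq_add] at h
  rw [h]
  abel

lemma rel_sy (j : Fin a) (hj1 : (j : ℕ) ≠ i) (hj2 : (j : ℕ) ≠ i + 1) :
    sg a R hb ⟨i, h1⟩ * yg a R hb j = yg a R hb j * sg a R hb ⟨i, h1⟩ := by
  have h := RingQuot.mkAlgHom_rel R (VWRel.vw3c (a := a) (hb := hb) ⟨i, h1⟩ j hj1 hj2)
  simp only [map_mul] at h
  simpa only [yg, sg] using h

lemma rel_ey (j : Fin a) (hj1 : (j : ℕ) ≠ i) (hj2 : (j : ℕ) ≠ i + 1) :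
    eg a R hb ⟨i, h1⟩ * yg a R hb j = yg a R hb j * eg a R hb ⟨i, h1⟩ := by
  have h := RingQuot.mkAlgHom_rel R (VWRel.vw2c (a := a) (hb := hb) ⟨i, h1⟩ j hj1 hj2)
  simp only [map_mul] at h
  simpa only [yg, eg] using h

lemma rel_ye_i1 :
    yg a R hb ⟨i + 1, hy2⟩ * eg a R hb ⟨i, h1⟩ =
      yg a R hb ⟨i, hy⟩ * eg a R hb ⟨i, h1⟩ -
        algebraMap R (VWA a R hb) hb * eg a R hb ⟨i, h1⟩ := by
  have h := RingQuot.mkAlgHom_rel R (VWRel.vw9b (a := a) (hb := hb) i h1 hy hy2)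
  simp only [map_sub, map_mul, map_neg, Hf, AlgHom.commutes, sub_mul] at h
  simp only [yg, eg]
  rw [sub_eq_iff_eq_add] at h
  rw [h]
  abel

end VWAux
section VWAux2

open MvPolynomial Finset

/-- pure ring identity used for left multiplication by a commuting generator -/
lemma vw_term_j {A : Type} [Ring A] (Yj Yk E f : A)
    (c : Yj * Yk = Yk * Yj) (r : E * Yj = Yj * E) :
    Yj * (Yk * E * f) = Yk * E * (Yj * f) := by
  calc Yj * (Yk * E * f) = ((Yj * Yk) * E) * f := by noncomm_ring
    _ = ((Yk * Yj) * E) * f := by rw [c]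
    _ = (Yk * (Yj * E)) * f := by noncomm_ring
    _ = (Yk * (E * Yj)) * f := by rw [r]
    _ = Yk * E * (Yj * f) := by noncomm_ring

/-- pure ring identity used for left multiplication by `y_{i+1}` -/
lemma vw_term_i1 {A : Type} [Ring A] (Yi1 Yi Yk E H f : A)
    (c1 : Yi1 * Yk = Yk * Yi1) (c2 : Yi * Yk = Yk * Yi)
    (r : Yi1 * E = Yi * E - H * E) (hc : H * E = E * H) :
    Yi1 * (Yk * E * f) = Yi * (Yk * E * f) + -(Yk * E * (H * f)) := by
  calc Yi1 * (Yk * E * f) = ((Yi1 * Yk) * E) * f := by noncomm_ring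
    _ = ((Yk * Yi1) * E) * f := by rw [c1]
    _ = (Yk * (Yi1 * E)) * f := by noncomm_ring
    _ = (Yk * (Yi * E - H * E)) * f := by rw [r]
    _ = ((Yk * Yi) * E) * f - (Yk * (H * E)) * f := by noncomm_ring
    _ = ((Yi * Yk) * E) * f - (Yk * (E * H)) * f := by rw [c2, hc]
    _ = Yi * (Yk * E * f) + -(Yk * E * (H * f)) := by noncomm_ring

variable (a : ℕ) (R : Type) [CommRing R] (hb : R)
variable (i : ℕ) (h1 : i < a - 1) (hy : i < a) (hy2 : i + 1 < a)

/-- Membership in the set of elements of the form `∑_{j<N} y_i^j e_i φ(p_j)`. -/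
def InM (N : ℕ) (x : VWA a R hb) : Prop :=
  ∃ p : ℕ → MvPolynomial (Fin a) R,
    x = ∑ j ∈ Finset.range N,
      yg a R hb ⟨i, hy⟩ ^ j * eg a R hb ⟨i, h1⟩ * vwphi a R hb (p j)

lemma InM_zero (N : ℕ) : InM a R hb i h1 hy N 0 :=
  ⟨fun _ => 0, by simp⟩

lemma InM_add {N : ℕ} {x y : VWA a R hb} (hx : InM a R hb i h1 hy N x)
    (hy' : InM a R hb i h1 hy N y) : InM a R hb i h1 hy N (x + y) := by
  obtain ⟨p, rfl⟩ := hx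
  obtain ⟨q, rfl⟩ := hy'
  exact ⟨fun j => p j + q j, by simp [map_add, mul_add, Finset.sum_add_distrib]⟩

lemma InM_neg {N : ℕ} {x : VWA a R hb} (hx : InM a R hb i h1 hy N x) :
    InM a R hb i h1 hy N (-x) := by
  obtain ⟨p, rfl⟩ := hx
  refine ⟨fun j => -(p j), ?_⟩
  rw [← Finset.sum_neg_distrib]
  refine Finset.sum_congr rfl fun k _ => ?_
  rw [map_neg]
  exact (mul_neg (α := VWA a R hb) _ _).symm

lemma InM_mono {N N' : ℕ} (hNN : N ≤ N') {x : VWA a R hb}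
    (hx : InM a R hb i h1 hy N x) : InM a R hb i h1 hy N' x := by
  obtain ⟨p, rfl⟩ := hx
  refine ⟨fun j => if j < N then p j else 0, ?_⟩
  rw [← Finset.sum_subset (Finset.range_subset_range.mpr hNN)]
  · exact Finset.sum_congr rfl fun j hj => by simp [Finset.mem_range.mp hj]
  · intro j _ hj
    simp only [Finset.mem_range] at hj
    simp [Nat.not_lt.mpr (Nat.le_of_not_lt hj)]

lemma InM_Eterm (p : MvPolynomial (Fin a) R) :
    InM a R hb i h1 hy 1
      (algebraMap R (VWA a R hb) hb * (eg a R hb ⟨i, h1⟩ * vwphi a R hb p)) := by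
  refine ⟨fun _ => MvPolynomial.C hb * p, ?_⟩
  rw [Finset.sum_range_one, pow_zero, one_mul, map_mul, phi_C,
    ← mul_assoc, Algebra.commutes hb (eg a R hb ⟨i, h1⟩), mul_assoc, ← mul_assoc]

lemma InM_Yi_mul {N : ℕ} {x : VWA a R hb} (hx : InM a R hb i h1 hy N x) :
    InM a R hb i h1 hy (N + 1) (yg a R hb ⟨i, hy⟩ * x) := by
  obtain ⟨p, rfl⟩ := hx
  refine ⟨fun j => if j = 0 then 0 else p (j - 1), ?_⟩
  rw [Finset.mul_sum]
  rw [Finset.sum_range_succ' (M := VWA a R hb)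
    (fun j => yg a R hb ⟨i, hy⟩ ^ j * eg a R hb ⟨i, h1⟩ *
      vwphi a R hb (if j = 0 then 0 else p (j - 1))) N]
  simp only [Nat.succ_ne_zero, if_false, eq_self_iff_true, if_true, Nat.add_sub_cancel,
    map_zero, mul_zero, add_zero]
  refine Finset.sum_congr rfl fun j _ => ?_
  rw [← mul_assoc, ← mul_assoc, ← pow_succ']

lemma InM_Yg_mul {N : ℕ} (j : Fin a) (hj1 : (j : ℕ) ≠ i) (hj2 : (j : ℕ) ≠ i + 1)
    {x : VWA a R hb} (hx : InM a R hb i h1 hy N x) :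
    InM a R hb i h1 hy N (yg a R hb j * x) := by
  obtain ⟨p, rfl⟩ := hx
  refine ⟨fun k => MvPolynomial.X j * p k, ?_⟩
  rw [Finset.mul_sum]
  refine Finset.sum_congr rfl fun k _ => ?_
  rw [map_mul, phi_X]
  exact vw_term_j _ _ _ _ ((Commute.pow_right (yg_comm a R hb j ⟨i, hy⟩) k))
    (rel_ey a R hb i h1 j hj1 hj2)

lemma InM_Yi1_mul {N : ℕ} {x : VWA a R hb} (hx : InM a R hb i h1 hy N x) :
    InM a R hb i h1 hy (N + 1) (yg a R hb ⟨i + 1, hy2⟩ * x) := by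
  obtain ⟨p, hp⟩ := hx
  have key : yg a R hb ⟨i + 1, hy2⟩ * x =
      yg a R hb ⟨i, hy⟩ * x +
        -(∑ k ∈ Finset.range N,
          yg a R hb ⟨i, hy⟩ ^ k * eg a R hb ⟨i, h1⟩ *
            vwphi a R hb (MvPolynomial.C hb * p k)) := by
    rw [hp, Finset.mul_sum, Finset.mul_sum, ← Finset.sum_neg_distrib,
      ← Finset.sum_add_distrib]
    refine Finset.sum_congr rfl fun k _ => ?_
    rw [map_mul, phi_C]
    exact vw_term_i1 _ _ _ _ _ _
      ((Commute.pow_right (yg_comm a R hb ⟨i + 1, hy2⟩ ⟨i, hy⟩) k))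
      ((Commute.pow_right (yg_comm a R hb ⟨i, hy⟩ ⟨i, hy⟩) k))
      (rel_ye_i1 a R hb i h1 hy hy2)
      (Algebra.commutes hb (eg a R hb ⟨i, h1⟩))
  rw [key]
  exact InM_add a R hb i h1 hy (InM_Yi_mul a R hb i h1 hy ⟨p, hp⟩)
    (InM_mono a R hb i h1 hy (Nat.le_succ N) (InM_neg a R hb i h1 hy ⟨_, rfl⟩))

end VWAux2
section VWAux3

open MvPolynomial Finset

/-- pure ring identity for the step case `j = i`. -/
lemma vw_step_i {A : Type} [Ring A] (S E H Yi Yi1 F G Q : A)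
    (e1 : Yi * S = S * Yi1 + (H * E - H)) (cH : H * Yi = Yi * H) :
    Yi * F * S - S * (Yi1 * G) + H * (Yi * Q + G)
      = Yi * (F * S - S * G + H * Q) + H * (E * G) := by
  have h2 : Yi * (S * G) = S * (Yi1 * G) + (H * (E * G) - H * G) := by
    rw [← mul_assoc, e1]; noncomm_ring
  have h3 : Yi * (H * Q) = H * (Yi * Q) := by rw [← mul_assoc, ← cH, mul_assoc]
  symm
  calc Yi * (F * S - S * G + H * Q) + H * (E * G)
      = Yi * (F * S) - Yi * (S * G) + Yi * (H * Q) + H * (E * G) := by noncomm_ring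
    _ = Yi * (F * S) - (S * (Yi1 * G) + (H * (E * G) - H * G)) + H * (Yi * Q)
          + H * (E * G) := by rw [h2, h3]
    _ = Yi * F * S - S * (Yi1 * G) + H * (Yi * Q + G) := by noncomm_ring

/-- pure ring identity for the step case `j = i + 1`. -/
lemma vw_step_i1 {A : Type} [Ring A] (S E H Yi Yi1 F G Q : A)
    (e2 : Yi1 * S = S * Yi + (H * E + H)) (cH : H * Yi1 = Yi1 * H) :
    Yi1 * F * S - S * (Yi * G) + H * (Yi1 * Q - G)
      = Yi1 * (F * S - S * G + H * Q) + H * (E * G) := by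
  have h2 : Yi1 * (S * G) = S * (Yi * G) + (H * (E * G) + H * G) := by
    rw [← mul_assoc, e2]; noncomm_ring
  have h3 : Yi1 * (H * Q) = H * (Yi1 * Q) := by rw [← mul_assoc, ← cH, mul_assoc]
  symm
  calc Yi1 * (F * S - S * G + H * Q) + H * (E * G)
      = Yi1 * (F * S) - Yi1 * (S * G) + Yi1 * (H * Q) + H * (E * G) := by noncomm_ring
    _ = Yi1 * (F * S) - (S * (Yi * G) + (H * (E * G) + H * G)) + H * (Yi1 * Q)
          + H * (E * G) := by rw [h2, h3]
    _ = Yi1 * F * S - S * (Yi * G) + H * (Yi1 * Q - G) := by noncomm_ring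

/-- pure ring identity for the generic step case. -/
lemma vw_step_j {A : Type} [Ring A] (S H Yj F G Q : A)
    (e : S * Yj = Yj * S) (cH : H * Yj = Yj * H) :
    Yj * F * S - S * (Yj * G) + H * (Yj * Q)
      = Yj * (F * S - S * G + H * Q) := by
  have h2 : Yj * (S * G) = S * (Yj * G) := by rw [← mul_assoc, ← e, mul_assoc]
  have h3 : Yj * (H * Q) = H * (Yj * Q) := by rw [← mul_assoc, ← cH, mul_assoc]
  symm
  calc Yj * (F * S - S * G + H * Q)
      = Yj * (F * S) - Yj * (S * G) + Yj * (H * Q) := by noncomm_ring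
    _ = Yj * (F * S) - S * (Yj * G) + H * (Yj * Q) := by rw [h2, h3]
    _ = Yj * F * S - S * (Yj * G) + H * (Yj * Q) := by noncomm_ring

variable (a : ℕ) (R : Type) [CommRing R] (hb : R)
variable (i : ℕ) (h1 : i < a - 1) (hy : i < a) (hy2 : i + 1 < a)

/-- The main inductive claim for a polynomial `f` and a bound `n`. -/
def Cl (n : ℕ) (f : MvPolynomial (Fin a) R) : Prop :=
  ∃ q : MvPolynomial (Fin a) R,
    (MvPolynomial.X (⟨i, hy⟩ : Fin a) - MvPolynomial.X ⟨i + 1, hy2⟩) * q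
        = f - MvPolynomial.rename (Equiv.swap (⟨i, hy⟩ : Fin a) ⟨i + 1, hy2⟩) f ∧
      InM a R hb i h1 hy n
        (vwphi a R hb f * sg a R hb ⟨i, h1⟩ -
          sg a R hb ⟨i, h1⟩ *
            vwphi a R hb (MvPolynomial.rename (Equiv.swap (⟨i, hy⟩ : Fin a) ⟨i + 1, hy2⟩) f) +
          algebraMap R (VWA a R hb) hb * vwphi a R hb q)

lemma Cl_zero (n : ℕ) : Cl a R hb i h1 hy hy2 n 0 :=
  ⟨0, by simp, by simpa using InM_zero a R hb i h1 hy n⟩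

lemma Cl_mono {n n' : ℕ} (h : n ≤ n') {f : MvPolynomial (Fin a) R}
    (hf : Cl a R hb i h1 hy hy2 n f) : Cl a R hb i h1 hy hy2 n' f := by
  obtain ⟨q, hq, hm⟩ := hf
  exact ⟨q, hq, InM_mono a R hb i h1 hy h hm⟩

lemma Cl_add {n : ℕ} {f g : MvPolynomial (Fin a) R}
    (hf : Cl a R hb i h1 hy hy2 n f) (hg : Cl a R hb i h1 hy hy2 n g) :
    Cl a R hb i h1 hy hy2 n (f + g) := by
  obtain ⟨q, hq, hm⟩ := hf
  obtain ⟨q', hq', hm'⟩ := hg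
  refine ⟨q + q', by rw [mul_add, hq, hq', map_add]; ring, ?_⟩
  have := InM_add a R hb i h1 hy hm hm'
  convert this using 1
  simp only [map_add, add_mul, mul_add]
  abel

lemma Cl_C (c : R) : Cl a R hb i h1 hy hy2 0 (MvPolynomial.C c) := by
  refine ⟨0, by simp [MvPolynomial.rename_C], ?_⟩
  have hc : vwphi a R hb (MvPolynomial.C c) = algebraMap R (VWA a R hb) c :=
    phi_C a R hb c
  rw [MvPolynomial.rename_C, hc, map_zero, mul_zero, add_zero, Algebra.commutes, sub_self]
  exact InM_zero a R hb i h1 hy 0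

lemma Cl_step {n : ℕ} (j : Fin a) {f : MvPolynomial (Fin a) R}
    (hf : Cl a R hb i h1 hy hy2 n f) :
    Cl a R hb i h1 hy hy2 (n + 1) (MvPolynomial.X j * f) := by
  obtain ⟨q, hq, hm⟩ := hf
  by_cases hji : j = (⟨i, hy⟩ : Fin a)
  · subst hji
    refine ⟨MvPolynomial.X (⟨i, hy⟩ : Fin a) * q +
      MvPolynomial.rename (Equiv.swap (⟨i, hy⟩ : Fin a) ⟨i + 1, hy2⟩) f, ?_, ?_⟩
    · rw [map_mul, MvPolynomial.rename_X, Equiv.swap_apply_left]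
      linear_combination (MvPolynomial.X (⟨i, hy⟩ : Fin a)) * hq
    · have key : vwphi a R hb (MvPolynomial.X (⟨i, hy⟩ : Fin a) * f) * sg a R hb ⟨i, h1⟩ -
          sg a R hb ⟨i, h1⟩ *
            vwphi a R hb (MvPolynomial.rename (Equiv.swap (⟨i, hy⟩ : Fin a) ⟨i + 1, hy2⟩)
              (MvPolynomial.X (⟨i, hy⟩ : Fin a) * f)) +
          algebraMap R (VWA a R hb) hb *
            vwphi a R hb (MvPolynomial.X (⟨i, hy⟩ : Fin a) * q +
              MvPolynomial.rename (Equiv.swap (⟨i, hy⟩ : Fin a) ⟨i + 1, hy2⟩) f) =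
          yg a R hb ⟨i, hy⟩ *
            (vwphi a R hb f * sg a R hb ⟨i, h1⟩ -
              sg a R hb ⟨i, h1⟩ *
                vwphi a R hb (MvPolynomial.rename (Equiv.swap (⟨i, hy⟩ : Fin a) ⟨i + 1, hy2⟩) f) +
              algebraMap R (VWA a R hb) hb * vwphi a R hb q) +
          algebraMap R (VWA a R hb) hb *
            (eg a R hb ⟨i, h1⟩ *
              vwphi a R hb (MvPolynomial.rename (Equiv.swap (⟨i, hy⟩ : Fin a) ⟨i + 1, hy2⟩) f)) := by
        simp only [map_mul, map_add, MvPolynomial.rename_X, Equiv.swap_apply_left, phi_X]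
        exact vw_step_i _ _ _ _ _ _ _ _
          (rel_ys_i a R hb i h1 hy hy2) (Algebra.commutes hb _)
      rw [key]
      exact InM_add a R hb i h1 hy (InM_Yi_mul a R hb i h1 hy hm)
        (InM_mono a R hb i h1 hy (by omega) (InM_Eterm a R hb i h1 hy _))
  · by_cases hji1 : j = (⟨i + 1, hy2⟩ : Fin a)
    · subst hji1
      refine ⟨MvPolynomial.X (⟨i + 1, hy2⟩ : Fin a) * q -
        MvPolynomial.rename (Equiv.swap (⟨i, hy⟩ : Fin a) ⟨i + 1, hy2⟩) f, ?_, ?_⟩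
      · rw [map_mul, MvPolynomial.rename_X, Equiv.swap_apply_right]
        linear_combination (MvPolynomial.X (⟨i + 1, hy2⟩ : Fin a)) * hq
      · have key : vwphi a R hb (MvPolynomial.X (⟨i + 1, hy2⟩ : Fin a) * f) * sg a R hb ⟨i, h1⟩ -
            sg a R hb ⟨i, h1⟩ *
              vwphi a R hb (MvPolynomial.rename (Equiv.swap (⟨i, hy⟩ : Fin a) ⟨i + 1, hy2⟩)
                (MvPolynomial.X (⟨i + 1, hy2⟩ : Fin a) * f)) +
            algebraMap R (VWA a R hb) hb *
              vwphi a R hb (MvPolynomial.X (⟨i + 1, hy2⟩ : Fin a) * q -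
                MvPolynomial.rename (Equiv.swap (⟨i, hy⟩ : Fin a) ⟨i + 1, hy2⟩) f) =
            yg a R hb ⟨i + 1, hy2⟩ *
              (vwphi a R hb f * sg a R hb ⟨i, h1⟩ -
                sg a R hb ⟨i, h1⟩ *
                  vwphi a R hb
                    (MvPolynomial.rename (Equiv.swap (⟨i, hy⟩ : Fin a) ⟨i + 1, hy2⟩) f) +
                algebraMap R (VWA a R hb) hb * vwphi a R hb q) +
            algebraMap R (VWA a R hb) hb *
              (eg a R hb ⟨i, h1⟩ *
                vwphi a R hb
                  (MvPolynomial.rename (Equiv.swap (⟨i, hy⟩ : Fin a) ⟨i + 1, hy2⟩) f)) := by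
          simp only [map_mul, map_sub, MvPolynomial.rename_X, Equiv.swap_apply_right, phi_X]
          exact vw_step_i1 _ _ _ _ _ _ _ _
            (rel_ys_i1 a R hb i h1 hy hy2) (Algebra.commutes hb _)
        rw [key]
        exact InM_add a R hb i h1 hy (InM_Yi1_mul a R hb i h1 hy hy2 hm)
          (InM_mono a R hb i h1 hy (by omega) (InM_Eterm a R hb i h1 hy _))
    · have hj1 : (j : ℕ) ≠ i := fun h => hji (Fin.ext h)
      have hj2 : (j : ℕ) ≠ i + 1 := fun h => hji1 (Fin.ext h)
      refine ⟨MvPolynomial.X j * q, ?_, ?_⟩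
      · rw [map_mul, MvPolynomial.rename_X, Equiv.swap_apply_of_ne_of_ne hji hji1]
        linear_combination (MvPolynomial.X j) * hq
      · have key : vwphi a R hb (MvPolynomial.X j * f) * sg a R hb ⟨i, h1⟩ -
            sg a R hb ⟨i, h1⟩ *
              vwphi a R hb (MvPolynomial.rename (Equiv.swap (⟨i, hy⟩ : Fin a) ⟨i + 1, hy2⟩)
                (MvPolynomial.X j * f)) +
            algebraMap R (VWA a R hb) hb * vwphi a R hb (MvPolynomial.X j * q) =
            yg a R hb j *
              (vwphi a R hb f * sg a R hb ⟨i, h1⟩ -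
                sg a R hb ⟨i, h1⟩ *
                  vwphi a R hb
                    (MvPolynomial.rename (Equiv.swap (⟨i, hy⟩ : Fin a) ⟨i + 1, hy2⟩) f) +
                algebraMap R (VWA a R hb) hb * vwphi a R hb q) := by
          simp only [map_mul, MvPolynomial.rename_X, Equiv.swap_apply_of_ne_of_ne hji hji1,
            phi_X]
          exact vw_step_j _ _ _ _ _ _
            (rel_sy a R hb i h1 j hj1 hj2) (Algebra.commutes hb _)
        rw [key]
        exact InM_mono a R hb i h1 hy (Nat.le_succ n)
          (InM_Yg_mul a R hb i h1 hy j hj1 hj2 hm)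

lemma Cl_pow {n : ℕ} (j : Fin a) (b : ℕ) {f : MvPolynomial (Fin a) R}
    (hf : Cl a R hb i h1 hy hy2 n f) :
    Cl a R hb i h1 hy hy2 (b + n) (MvPolynomial.X j ^ b * f) := by
  induction b with
  | zero => simpa using hf
  | succ b ih =>
    have : MvPolynomial.X j ^ (b + 1) * f = MvPolynomial.X j * (MvPolynomial.X j ^ b * f) := by
      rw [pow_succ']; ring
    rw [this, show b + 1 + n = (b + n) + 1 from by omega]
    exact Cl_step a R hb i h1 hy hy2 j ih

lemma Cl_monomial (d : Fin a →₀ ℕ) (c : R) :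
    Cl a R hb i h1 hy hy2 (d.sum fun _ e => e) (MvPolynomial.monomial d c) := by
  induction d using Finsupp.induction generalizing c with
  | zero => simpa [MvPolynomial.monomial_zero'] using Cl_C a R hb i h1 hy hy2 c
  | single_add j b d' hjd hb0 ih =>
    have hmon : (MvPolynomial.monomial (Finsupp.single j b + d') c : MvPolynomial (Fin a) R) =
        MvPolynomial.X j ^ b * MvPolynomial.monomial d' c := by
      rw [MvPolynomial.X_pow_eq_monomial, MvPolynomial.monomial_mul, one_mul]
    have hsum : ((Finsupp.single j b + d').sum fun _ e => e) = b + (d'.sum fun _ e => e) := by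
      rw [Finsupp.sum_add_index' (fun _ => rfl) (fun _ _ _ => rfl),
        Finsupp.sum_single_index rfl]
    rw [hmon, hsum]
    exact Cl_pow a R hb i h1 hy hy2 j b (ih c)

end VWAux3
/-- in `A_ħ`, if `g` is invariant under the transposition of the variables
`y_i, y_{i+1}`, then `φ(g)·s_i = s_i·φ(g) + Σ_{j<N} y_i^j·e_i·φ(p_j)` for some polynomials
`p_j`, with `N` the total degree of `g`. (Indices are 0-based.) -/
theorem statement12 (a : ℕ) (ha : 2 ≤ a) (i : ℕ) (hi : i < a - 1)
    (g : MvPolynomial (Fin a) (Polynomial ℂ))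
    (hg : MvPolynomial.rename
        (Equiv.swap (⟨i, by omega⟩ : Fin a) (⟨i + 1, by omega⟩ : Fin a)) g = g) :
    ∃ p : ℕ → MvPolynomial (Fin a) (Polynomial ℂ),
      vwphi a (Polynomial ℂ) Polynomial.X g * sg a (Polynomial ℂ) Polynomial.X ⟨i, hi⟩ =
        sg a (Polynomial ℂ) Polynomial.X ⟨i, hi⟩ * vwphi a (Polynomial ℂ) Polynomial.X g +
          ∑ j ∈ Finset.range g.totalDegree,
            yg a (Polynomial ℂ) Polynomial.X (⟨i, by omega⟩ : Fin a) ^ j * eg a (Polynomial ℂ) Polynomial.X ⟨i, hi⟩ *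
              vwphi a (Polynomial ℂ) Polynomial.X (p j) := by
  have hy : i < a := by omega
  have hy2 : i + 1 < a := by omega
  set R := Polynomial ℂ
  set hb : R := Polynomial.X
  -- the main claim for `g` with bound `g.totalDegree`
  have hcl : Cl a R hb i hi hy hy2 g.totalDegree g := by
    have hsum : (∑ d ∈ g.support, MvPolynomial.monomial d (MvPolynomial.coeff d g)) = g :=
      MvPolynomial.support_sum_monomial_coeff g
    have hcl0 : Cl a R hb i hi hy hy2 g.totalDegree
        (∑ d ∈ g.support, MvPolynomial.monomial d (MvPolynomial.coeff d g)) := by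
      refine Finset.sum_induction _ (Cl a R hb i hi hy hy2 g.totalDegree)
        (fun x y hx hy' => Cl_add a R hb i hi hy hy2 hx hy')
        (Cl_zero a R hb i hi hy hy2 _) (fun d hd => ?_)
      exact Cl_mono a R hb i hi hy hy2 (MvPolynomial.le_totalDegree hd)
        (Cl_monomial a R hb i hi hy hy2 d _)
    rwa [hsum] at hcl0
  obtain ⟨q, hq, hm⟩ := hcl
  have hg' : MvPolynomial.rename
      (Equiv.swap (⟨i, hy⟩ : Fin a) (⟨i + 1, hy2⟩ : Fin a)) g = g := hg
  rw [hg', sub_self] at hq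
  -- cancel to conclude q = 0
  have hXne : (MvPolynomial.X (⟨i, hy⟩ : Fin a) -
      MvPolynomial.X (⟨i + 1, hy2⟩ : Fin a) : MvPolynomial (Fin a) R) ≠ 0 := by
    rw [sub_ne_zero]
    intro hXX
    have := MvPolynomial.X_injective (R := R) hXX
    simp [Fin.ext_iff] at this
  have hq0 : q = 0 := by
    rcases mul_eq_zero.mp hq with h | h
    · exact absurd h hXne
    · exact h
  rw [hg', hq0, map_zero, mul_zero, add_zero] at hm
  obtain ⟨p, hp⟩ := hm
  refine ⟨p, ?_⟩
  have : vwphi a R hb g * sg a R hb ⟨i, hi⟩ =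
      sg a R hb ⟨i, hi⟩ * vwphi a R hb g +
        ∑ j ∈ Finset.range g.totalDegree,
          yg a R hb (⟨i, hy⟩ : Fin a) ^ j * eg a R hb ⟨i, hi⟩ * vwphi a R hb (p j) := by
    rw [← hp]
    abel
  exact this
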